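/- Let (X,d) be a metric space in which every open ball B(x,r) is relatively compact, and suppose there exists C ≥ 1 such that d_ε(x,y) ≤ C d(x,y) for all ε > 0 and all x,y ∈ X. Define ρ(x,y) := lim_{ε↓0} d_ε(x,y). Then for every x,y ∈ X there exists a midpoint z ∈ X for ρ, i.e., a point z with ρ(x,z) = ρ(y,z) = ρ(x,y)/2. -/

import Mathlib

open Metric ENNReal

/-- The `ε`-chain metric `d_ε` associated with a distance function `ρ`:
the infimum of total lengths of `ε`-chains from `x` to `y` (infimum of the
empty set being `∞`). -/
noncomputable def chainDist {X : Type*} (ρ : X → X → ℝ) (ε : ℝ) (x y : X) : ℝ≥0∞ :=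
  ⨅ c : {c : ℕ × (ℕ → X) // 0 < c.1 ∧ c.2 0 = x ∧ c.2 c.1 = y ∧
      ∀ i < c.1, ρ (c.2 i) (c.2 (i + 1)) < ε},
    ∑ i ∈ Finset.range c.val.1, ENNReal.ofReal (ρ (c.val.2 i) (c.val.2 (i + 1)))

section Helpers

variable {X : Type*} [MetricSpace X]

lemma chainDist_le_of_chain {ε : ℝ} (hε : 0 < ε) (N : ℕ) (f : ℕ → X)
    (hf : ∀ i < N, dist (f i) (f (i + 1)) < ε) :
    chainDist dist ε (f 0) (f N) ≤
      ∑ i ∈ Finset.range N, ENNReal.ofReal (dist (f i) (f (i + 1))) := by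
  rcases Nat.eq_zero_or_pos N with h | h
  · subst h
    have h1 : chainDist dist ε (f 0) (f 0) ≤
        ∑ i ∈ Finset.range 1,
          ENNReal.ofReal (dist ((fun _ : ℕ => f 0) i) ((fun _ : ℕ => f 0) (i + 1))) := by
      unfold chainDist
      exact iInf_le_of_le ⟨(1, fun _ => f 0), Nat.one_pos, rfl, rfl,
        fun i _ => by simpa using hε⟩ le_rfl
    simpa using h1
  · unfold chainDist
    exact iInf_le_of_le ⟨(N, f), h, rfl, rfl, hf⟩ le_rfl

lemma ofReal_dist_le_chainDist (ε : ℝ) (x y : X) :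
    ENNReal.ofReal (dist x y) ≤ chainDist dist ε x y := by
  unfold chainDist
  refine le_iInf fun c => ?_
  obtain ⟨⟨N, f⟩, hN, hx, hy, hstep⟩ := c
  dsimp only at hx hy hstep ⊢
  calc ENNReal.ofReal (dist x y) = ENNReal.ofReal (dist (f 0) (f N)) := by rw [hx, hy]
    _ ≤ ENNReal.ofReal (∑ i ∈ Finset.range N, dist (f i) (f (i + 1))) :=
        ENNReal.ofReal_le_ofReal (dist_le_range_sum_dist f N)
    _ = ∑ i ∈ Finset.range N, ENNReal.ofReal (dist (f i) (f (i + 1))) :=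
        ENNReal.ofReal_sum_of_nonneg fun i _ => dist_nonneg

lemma chainDist_anti {ε ε' : ℝ} (h : ε ≤ ε') (x y : X) :
    chainDist dist ε' x y ≤ chainDist dist ε x y := by
  unfold chainDist
  refine le_iInf fun c => ?_
  exact iInf_le_of_le
    ⟨c.1, c.2.1, c.2.2.1, c.2.2.2.1, fun i hi => lt_of_lt_of_le (c.2.2.2.2 i hi) h⟩ le_rfl

lemma chainDist_comm_le (ε : ℝ) (x y : X) :
    chainDist dist ε y x ≤ chainDist dist ε x y := by
  unfold chainDist
  refine le_iInf fun c => ?_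
  obtain ⟨⟨N, f⟩, hN, hx, hy, hstep⟩ := c
  dsimp only at hx hy hstep ⊢
  refine iInf_le_of_le (⟨(N, fun i => f (N - i)), hN, by simpa using hy, by simpa using hx, ?_⟩ :
    {c : ℕ × (ℕ → X) // 0 < c.1 ∧ c.2 0 = y ∧ c.2 c.1 = x ∧
      ∀ i < c.1, dist (c.2 i) (c.2 (i + 1)) < ε}) ?_
  · intro i hi
    have h1 : N - i = N - (i + 1) + 1 := by omega
    simp only []
    rw [h1]
    rw [dist_comm]
    exact hstep (N - (i + 1)) (by omega)
  · apply le_of_eq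
    rw [← Finset.sum_range_reflect (fun j => ENNReal.ofReal (dist (f j) (f (j + 1)))) N]
    refine Finset.sum_congr rfl fun i hi => ?_
    rw [Finset.mem_range] at hi
    have e1 : N - (i + 1) = N - 1 - i := by omega
    have e2 : N - i = N - 1 - i + 1 := by omega
    simp only [e1, e2, dist_comm]

lemma chainDist_comm (ε : ℝ) (x y : X) :
    chainDist dist ε x y = chainDist dist ε y x :=
  le_antisymm (chainDist_comm_le ε y x) (chainDist_comm_le ε x y)

lemma exists_chain_lt {ε : ℝ} {x y : X} {t : ℝ≥0∞} (h : chainDist dist ε x y < t) :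
    ∃ (N : ℕ) (f : ℕ → X), 0 < N ∧ f 0 = x ∧ f N = y ∧
      (∀ i < N, dist (f i) (f (i + 1)) < ε) ∧
      ∑ i ∈ Finset.range N, ENNReal.ofReal (dist (f i) (f (i + 1))) < t := by
  unfold chainDist at h
  obtain ⟨⟨⟨N, f⟩, hN, hx, hy, hstep⟩, hc⟩ := iInf_lt_iff.mp h
  exact ⟨N, f, hN, hx, hy, hstep, hc⟩

lemma chainDist_triangle {ε : ℝ} (hε : 0 < ε) (x y z : X) :
    chainDist dist ε x z ≤ chainDist dist ε x y + chainDist dist ε y z := by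
  by_cases h1 : chainDist dist ε x y = ⊤
  · simp [h1]
  by_cases h2 : chainDist dist ε y z = ⊤
  · simp [h2]
  refine ENNReal.le_of_forall_pos_le_add fun η hη _ => ?_
  have hη2 : ((η : ℝ≥0∞) / 2) ≠ 0 := by
    simp [ENNReal.div_eq_zero_iff, hη.ne']
  obtain ⟨N1, f1, hN1, hx1, hy1, hstep1, hsum1⟩ :=
    exists_chain_lt (ENNReal.lt_add_right h1 hη2)
  obtain ⟨N2, f2, hN2, hx2, hy2, hstep2, hsum2⟩ :=
    exists_chain_lt (ENNReal.lt_add_right h2 hη2)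
  set g : ℕ → X := fun i => if i < N1 then f1 i else f2 (i - N1) with hg
  have hg0 : g 0 = x := by simp [hg, hN1, hx1]
  have hgN : g (N1 + N2) = z := by
    simp only [hg]
    rw [if_neg (by omega)]
    simpa using hy2
  have hgmid : ∀ i ≤ N1, g i = f1 i := by
    intro i hi
    rcases lt_or_eq_of_le hi with h | h
    · simp [hg, h]
    · subst h
      simp only [hg]
      rw [if_neg (by omega)]
      rw [Nat.sub_self, hx2, ← hy1]
  have hgtail : ∀ i, g (N1 + i) = f2 i := by
    intro i
    simp only [hg]
    rw [if_neg (by omega)]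
    congr 1
    omega
  have hgstep : ∀ i < N1 + N2, dist (g i) (g (i + 1)) < ε := by
    intro i hi
    by_cases h : i < N1
    · rw [hgmid i h.le, hgmid (i + 1) h]
      exact hstep1 i h
    · have e : i = N1 + (i - N1) := by omega
      have e' : i + 1 = N1 + (i - N1 + 1) := by omega
      rw [e, hgtail, show N1 + (i - N1) + 1 = N1 + (i - N1 + 1) by omega, hgtail]
      exact hstep2 (i - N1) (by omega)
  have key := chainDist_le_of_chain hε (N1 + N2) g hgstep
  rw [hg0, hgN] at key
  refine key.trans ?_
  have hsplit : ∑ i ∈ Finset.range (N1 + N2), ENNReal.ofReal (dist (g i) (g (i + 1)))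
      = (∑ i ∈ Finset.range N1, ENNReal.ofReal (dist (f1 i) (f1 (i + 1))))
        + ∑ i ∈ Finset.range N2, ENNReal.ofReal (dist (f2 i) (f2 (i + 1))) := by
    rw [← Finset.sum_range_add_sum_Ico _ (Nat.le_add_right N1 N2)]
    congr 1
    · refine Finset.sum_congr rfl fun i hi => ?_
      rw [Finset.mem_range] at hi
      rw [hgmid i hi.le, hgmid (i + 1) hi]
    · rw [Finset.sum_Ico_eq_sum_range]
      simp only [Nat.add_sub_cancel_left]
      refine Finset.sum_congr rfl fun i hi => ?_
      rw [hgtail, show N1 + i + 1 = N1 + (i + 1) by omega, hgtail]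
  rw [hsplit]
  calc _ ≤ (chainDist dist ε x y + (η : ℝ≥0∞) / 2) + (chainDist dist ε y z + (η : ℝ≥0∞) / 2) :=
        add_le_add hsum1.le hsum2.le
    _ = chainDist dist ε x y + chainDist dist ε y z + η := by
        rw [add_add_add_comm, ENNReal.add_halves]

end Helpers

section Mid

variable {X : Type*} [MetricSpace X]

lemma exists_approx_midpoint {ε : ℝ} (hε : 0 < ε) (x y : X)
    (hfin : chainDist dist ε x y ≠ ⊤) :
    ∃ z : X, chainDist dist ε x z ≤ (chainDist dist ε x y + ENNReal.ofReal ε) / 2 ∧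
      chainDist dist ε z y ≤ (chainDist dist ε x y + ENNReal.ofReal ε) / 2 + ENNReal.ofReal ε := by
  classical
  have hofε : ENNReal.ofReal ε ≠ 0 := by
    simp [ENNReal.ofReal_eq_zero, hε.not_ge]
  obtain ⟨N, f, hN, hx, hy, hstep, hsum⟩ :=
    exists_chain_lt (ENNReal.lt_add_right hfin hofε)
  set F : ℕ → ℝ≥0∞ := fun i => ENNReal.ofReal (dist (f i) (f (i + 1))) with hF
  have hFfin : ∀ i, F i ≠ ⊤ := fun i => ENNReal.ofReal_ne_top
  set S : ℝ≥0∞ := ∑ i ∈ Finset.range N, F i with hS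
  set k := Nat.findGreatest (fun m => ∑ i ∈ Finset.range m, F i ≤ S / 2) N with hk
  have hkN : k ≤ N := Nat.findGreatest_le N
  have hPk : ∑ i ∈ Finset.range k, F i ≤ S / 2 :=
    Nat.findGreatest_spec (P := fun m => ∑ i ∈ Finset.range m, F i ≤ S / 2) (Nat.zero_le N)
      (show ∑ i ∈ Finset.range 0, F i ≤ S / 2 by simp)
  refine ⟨f k, ?_, ?_⟩
  · have h1 : chainDist dist ε x (f k) ≤ ∑ i ∈ Finset.range k, F i := by
      have h := chainDist_le_of_chain hε k f (fun i hi => hstep i (lt_of_lt_of_le hi hkN))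
      rwa [hx] at h
    exact h1.trans (hPk.trans (ENNReal.div_le_div_right hsum.le 2))
  · have h2 : chainDist dist ε (f k) y ≤ ∑ i ∈ Finset.Ico k N, F i := by
      have hstep' : ∀ i < N - k, dist ((fun i => f (k + i)) i) ((fun i => f (k + i)) (i + 1)) < ε := by
        intro i hi
        simpa [Nat.add_assoc] using hstep (k + i) (by omega)
      have h := chainDist_le_of_chain hε (N - k) (fun i => f (k + i)) hstep'
      simp only [Nat.add_zero] at h
      rw [show k + (N - k) = N by omega, hy] at h
      refine h.trans (le_of_eq ?_)
      rw [Finset.sum_Ico_eq_sum_range]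
      refine Finset.sum_congr rfl fun i _ => ?_
      simp [hF, Nat.add_assoc]
    have hQ : ∑ i ∈ Finset.Ico k N, F i ≤ S / 2 + ENNReal.ofReal ε := by
      rcases eq_or_lt_of_le hkN with he | hlt'
      · rw [he]
        simp
      · have hgt : ¬ (∑ i ∈ Finset.range (k + 1), F i ≤ S / 2) :=
          Nat.findGreatest_is_greatest
            (P := fun m => ∑ i ∈ Finset.range m, F i ≤ S / 2) (Nat.lt_succ_self k) hlt'
        push_neg at hgt
        have hP1fin : ∑ i ∈ Finset.range (k + 1), F i ≠ ⊤ :=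
          ENNReal.sum_ne_top.mpr fun i _ => hFfin i
        have hsplit : ∑ i ∈ Finset.range (k + 1), F i + ∑ i ∈ Finset.Ico (k + 1) N, F i = S :=
          Finset.sum_range_add_sum_Ico F (by omega)
        have hR : ∑ i ∈ Finset.Ico (k + 1) N, F i ≤ S / 2 := by
          have h3 : ∑ i ∈ Finset.range (k + 1), F i + ∑ i ∈ Finset.Ico (k + 1) N, F i ≤
              ∑ i ∈ Finset.range (k + 1), F i + S / 2 := by
            rw [hsplit]
            calc S = S / 2 + S / 2 := (ENNReal.add_halves S).symm
              _ ≤ ∑ i ∈ Finset.range (k + 1), F i + S / 2 := add_le_add_left hgt.le _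
          exact (ENNReal.add_le_add_iff_left hP1fin).mp h3
        rw [Finset.sum_eq_sum_Ico_succ_bot hlt' F]
        have hFk : F k ≤ ENNReal.ofReal ε := ENNReal.ofReal_le_ofReal (hstep k hlt').le
        calc F k + ∑ i ∈ Finset.Ico (k + 1) N, F i ≤ ENNReal.ofReal ε + S / 2 :=
              add_le_add hFk hR
          _ = S / 2 + ENNReal.ofReal ε := add_comm _ _
    exact h2.trans (hQ.trans (add_le_add_left (ENNReal.div_le_div_right hsum.le 2) _))

end Mid

/-- under the chain condition (with all balls relatively compact),
the limit metric `ρ(x,y) := lim_{ε↓0} d_ε(x,y)` admits midpoints: for all `x, y`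
there is `z` with `ρ(x,z) = ρ(y,z) = ρ(x,y)/2`. -/
theorem chainDist_limit_midpoint {X : Type*} [MetricSpace X]
    (hrel : ∀ (x : X) (r : ℝ), IsCompact (closure (Metric.ball x r)))
    (C : ℝ) (hC : 1 ≤ C)
    (hchain : ∀ ε : ℝ, 0 < ε → ∀ x y : X,
      chainDist dist ε x y ≤ ENNReal.ofReal (C * dist x y))
    (ρ : X → X → ℝ≥0∞)
    (hρ : ∀ x y : X, Filter.Tendsto (fun ε : ℝ => chainDist dist ε x y)
      (nhdsWithin 0 (Set.Ioi 0)) (nhds (ρ x y))) :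
    ∀ x y : X, ∃ z : X, ρ x z = ρ x y / 2 ∧ ρ y z = ρ x y / 2 := by
  classical
  have hρ_le : ∀ a b : X, ρ a b ≤ ENNReal.ofReal (C * dist a b) := by
    intro a b
    refine le_of_tendsto (hρ a b) ?_
    filter_upwards [self_mem_nhdsWithin] with ε hε
    exact hchain ε hε a b
  have hρ_fin : ∀ a b : X, ρ a b ≠ ⊤ := fun a b =>
    ((hρ_le a b).trans_lt ENNReal.ofReal_lt_top).ne
  have hd_le_ρ : ∀ (ε : ℝ), 0 < ε → ∀ a b : X, chainDist dist ε a b ≤ ρ a b := by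
    intro ε hε a b
    refine ge_of_tendsto (hρ a b) ?_
    have hev : ∀ᶠ ε' in nhdsWithin (0:ℝ) (Set.Ioi 0), ε' < ε :=
      Filter.Eventually.filter_mono nhdsWithin_le_nhds (gt_mem_nhds hε)
    filter_upwards [hev] with ε' hε'
    exact chainDist_anti hε'.le a b
  have hρ_comm : ∀ a b : X, ρ a b = ρ b a := by
    intro a b
    refine tendsto_nhds_unique (hρ a b) ?_
    exact (hρ b a).congr fun ε => chainDist_comm ε b a
  have hρ_tri : ∀ a b c : X, ρ a c ≤ ρ a b + ρ b c := by
    intro a b c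
    refine le_of_tendsto_of_tendsto (hρ a c) ((hρ a b).add (hρ b c)) ?_
    filter_upwards [self_mem_nhdsWithin] with ε hε
    exact chainDist_triangle hε a b c
  intro x y
  set D := ρ x y with hD
  have hεpos : ∀ n : ℕ, (0:ℝ) < 1 / (n + 1) := fun n => by positivity
  have hfin : ∀ n : ℕ, chainDist dist (1 / ((n:ℝ) + 1)) x y ≠ ⊤ := fun n =>
    ((hchain _ (hεpos n) x y).trans_lt ENNReal.ofReal_lt_top).ne
  choose zseq hz1 hz2 using fun n => exists_approx_midpoint (hεpos n) x y (hfin n)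
  have hE : ∀ n : ℕ, (chainDist dist (1 / ((n:ℝ) + 1)) x y + ENNReal.ofReal (1 / ((n:ℝ)+1))) / 2
      ≤ D / 2 + ENNReal.ofReal (1 / ((n:ℝ)+1)) := by
    intro n
    calc (chainDist dist (1 / ((n:ℝ) + 1)) x y + ENNReal.ofReal (1 / ((n:ℝ)+1))) / 2
        ≤ (D + ENNReal.ofReal (1 / ((n:ℝ)+1))) / 2 :=
          ENNReal.div_le_div_right (add_le_add_left (hd_le_ρ _ (hεpos n) x y) _) 2
      _ = D / 2 + ENNReal.ofReal (1 / ((n:ℝ)+1)) / 2 := ENNReal.add_div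
      _ ≤ D / 2 + ENNReal.ofReal (1 / ((n:ℝ)+1)) := add_le_add_right ENNReal.half_le_self _
  have hofε_le_one : ∀ n : ℕ, ENNReal.ofReal (1 / ((n:ℝ)+1)) ≤ 1 := by
    intro n
    rw [← ENNReal.ofReal_one]
    refine ENNReal.ofReal_le_ofReal ?_
    rw [div_le_one (by positivity)]
    linarith [Nat.cast_nonneg (α := ℝ) n]
  have hdist : ∀ n : ℕ, zseq n ∈ Metric.ball x (D.toReal + 2) := by
    intro n
    have h1 : ENNReal.ofReal (dist x (zseq n)) ≤ D / 2 + ENNReal.ofReal (1 / ((n:ℝ)+1)) :=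
      (ofReal_dist_le_chainDist _ x (zseq n)).trans ((hz1 n).trans (hE n))
    have h2 : D / 2 + ENNReal.ofReal (1 / ((n:ℝ)+1)) ≤ D + 1 :=
      add_le_add ENNReal.half_le_self (hofε_le_one n)
    have hDfin : D + 1 ≠ ⊤ := ENNReal.add_ne_top.mpr ⟨hρ_fin x y, ENNReal.one_ne_top⟩
    have h3 := h1.trans h2
    rw [← ENNReal.ofReal_toReal hDfin] at h3
    have h4 : dist x (zseq n) ≤ (D + 1).toReal :=
      (ENNReal.ofReal_le_ofReal_iff ENNReal.toReal_nonneg).mp h3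
    have h5 : (D + 1).toReal = D.toReal + 1 := by
      rw [ENNReal.toReal_add (hρ_fin x y) ENNReal.one_ne_top, ENNReal.toReal_one]
    rw [Metric.mem_ball, dist_comm]
    linarith
  obtain ⟨z, -, φ, hφ, hconv⟩ :=
    (hrel x (D.toReal + 2)).tendsto_subseq (fun n => subset_closure (hdist n))
  have hεφ : Filter.Tendsto (fun n : ℕ => (1:ℝ) / ((φ n : ℝ) + 1)) Filter.atTop (nhds 0) := by
    have := (tendsto_one_div_add_atTop_nhds_zero_nat (𝕜 := ℝ)).comp hφ.tendsto_atTop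
    exact this
  have t1 : Filter.Tendsto (fun n : ℕ => ENNReal.ofReal (1 / ((φ n : ℝ)+1)))
      Filter.atTop (nhds 0) := by
    rw [← ENNReal.ofReal_zero]
    exact ENNReal.tendsto_ofReal hεφ
  have hdz : Filter.Tendsto (fun n : ℕ => dist (zseq (φ n)) z) Filter.atTop (nhds 0) := by
    simpa [Function.comp] using hconv.dist (tendsto_const_nhds (α := ℕ) (x := z))
  have t2 : Filter.Tendsto (fun n : ℕ => ENNReal.ofReal (C * dist (zseq (φ n)) z))
      Filter.atTop (nhds 0) := by
    rw [← ENNReal.ofReal_zero]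
    apply ENNReal.tendsto_ofReal
    simpa using hdz.const_mul C
  set c : ℕ → ℝ≥0∞ := fun n => ENNReal.ofReal (1 / ((φ n : ℝ)+1)) +
    ENNReal.ofReal (1 / ((φ n : ℝ)+1)) + ENNReal.ofReal (C * dist (zseq (φ n)) z) with hc
  have hcn : Filter.Tendsto c Filter.atTop (nhds 0) := by
    have h := (t1.add t1).add t2
    simp only [add_zero] at h
    exact h
  have hlim : Filter.Tendsto (fun n : ℕ => D / 2 + c n) Filter.atTop (nhds (D / 2)) := by
    have h := (tendsto_const_nhds (α := ℕ) (x := D / 2) (f := Filter.atTop)).add hcn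
    simp only [add_zero] at h
    exact h
  have claim : ∀ δ : ℝ, 0 < δ → chainDist dist δ x z ≤ D / 2 ∧ chainDist dist δ y z ≤ D / 2 := by
    intro δ hδ
    obtain ⟨n₀, hn₀⟩ := exists_nat_one_div_lt (ε := δ) hδ
    have hev : ∀ᶠ n : ℕ in Filter.atTop, (1:ℝ) / ((φ n : ℝ) + 1) ≤ δ := by
      filter_upwards [Filter.eventually_ge_atTop n₀] with n hn
      have h6 : (n₀ : ℕ) ≤ φ n := le_trans hn hφ.le_apply
      have h7 : ((n₀:ℝ) + 1) ≤ ((φ n : ℝ) + 1) := by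
        have : (n₀:ℝ) ≤ (φ n : ℝ) := Nat.cast_le.mpr h6
        linarith
      calc (1:ℝ) / ((φ n : ℝ) + 1) ≤ 1 / ((n₀:ℝ) + 1) :=
            one_div_le_one_div_of_le (by positivity) h7
        _ ≤ δ := hn₀.le
    constructor
    · refine ge_of_tendsto hlim ?_
      filter_upwards [hev] with n hn
      calc chainDist dist δ x z
          ≤ chainDist dist δ x (zseq (φ n)) + chainDist dist δ (zseq (φ n)) z :=
            chainDist_triangle hδ x (zseq (φ n)) z
        _ ≤ (D / 2 + ENNReal.ofReal (1 / ((φ n : ℝ)+1))) + ENNReal.ofReal (C * dist (zseq (φ n)) z) := by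
            refine add_le_add ?_ (hchain δ hδ _ _)
            exact (chainDist_anti hn x (zseq (φ n))).trans ((hz1 (φ n)).trans (hE (φ n)))
        _ ≤ D / 2 + c n := by
            simp only [hc]
            refine le_trans (le_of_eq (add_assoc _ _ _)) (add_le_add_right ?_ _)
            rw [add_assoc]
            exact le_add_self
    · refine ge_of_tendsto hlim ?_
      filter_upwards [hev] with n hn
      calc chainDist dist δ y z
          ≤ chainDist dist δ y (zseq (φ n)) + chainDist dist δ (zseq (φ n)) z :=
            chainDist_triangle hδ y (zseq (φ n)) z
        _ ≤ (D / 2 + ENNReal.ofReal (1 / ((φ n : ℝ)+1)) + ENNReal.ofReal (1 / ((φ n : ℝ)+1)))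
              + ENNReal.ofReal (C * dist (zseq (φ n)) z) := by
            refine add_le_add ?_ (hchain δ hδ _ _)
            rw [chainDist_comm]
            refine (chainDist_anti hn (zseq (φ n)) y).trans ?_
            refine (hz2 (φ n)).trans ?_
            exact add_le_add_left (hE (φ n)) _
        _ = D / 2 + c n := by simp only [hc]; ring
  have hxz : ρ x z ≤ D / 2 := by
    refine le_of_tendsto (hρ x z) ?_
    filter_upwards [self_mem_nhdsWithin] with δ hδ
    exact (claim δ hδ).1
  have hyz : ρ y z ≤ D / 2 := by
    refine le_of_tendsto (hρ y z) ?_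
    filter_upwards [self_mem_nhdsWithin] with δ hδ
    exact (claim δ hδ).2
  have htri : D ≤ ρ x z + ρ y z := by
    calc D = ρ x y := hD
      _ ≤ ρ x z + ρ z y := hρ_tri x z y
      _ = ρ x z + ρ y z := by rw [hρ_comm z y]
  have hhalf_fin : D / 2 ≠ ⊤ := (ENNReal.div_lt_top (hρ_fin x y) two_ne_zero).ne
  refine ⟨z, ?_, ?_⟩
  · refine le_antisymm hxz ?_
    by_contra h
    push_neg at h
    have : D < D := by
      calc D ≤ ρ x z + ρ y z := htri
        _ ≤ ρ x z + D / 2 := add_le_add_right hyz _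
        _ < D / 2 + D / 2 := ENNReal.add_lt_add_right hhalf_fin h
        _ = D := ENNReal.add_halves D
    exact absurd this (lt_irrefl D)
  · refine le_antisymm hyz ?_
    by_contra h
    push_neg at h
    have : D < D := by
      calc D ≤ ρ x z + ρ y z := htri
        _ ≤ D / 2 + ρ y z := add_le_add_left hxz _
        _ < D / 2 + D / 2 := ENNReal.add_lt_add_left hhalf_fin h
        _ = D := ENNReal.add_halves D
    exact absurd this (lt_irrefl D)
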